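/- The group compact coarse structure 𝓔_𝓚 on a Hausdorff topological group G is compatible with the topology of G if and only if G is locally compact. -/

import Mathlib

open scoped Pointwise

/-- A generating family on a group `G`. -/
def GenFam {G : Type*} [Group G] (𝓕 : Set (Set G)) : Prop :=
  (∃ A ∈ 𝓕, A.Nonempty) ∧
  (∀ A ∈ 𝓕, ∀ B ∈ 𝓕, A ∪ B ∈ 𝓕) ∧
  (∀ A ∈ 𝓕, ∀ B ∈ 𝓕, A * B ∈ 𝓕) ∧
  (∀ A ∈ 𝓕, A⁻¹ ∈ 𝓕) ∧
  ⋃₀ 𝓕 = Set.univ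

/-- `G(F × F) = {(g a, g b) : g ∈ G, a, b ∈ F}`. -/
def grpEnt {G : Type*} [Group G] (F : Set G) : Set (G × G) :=
  {p | ∃ g : G, ∃ a ∈ F, ∃ b ∈ F, p = (g * a, g * b)}

/-- The coarse structure associated to a generating family. -/
def EF {G : Type*} [Group G] (𝓕 : Set (Set G)) : Set (Set (G × G)) :=
  {E | ∃ F ∈ 𝓕, E ⊆ grpEnt F}

/-- The group compact generating family: relatively compact subsets. -/
def relCpt (G : Type*) [TopologicalSpace G] : Set (Set G) :=
  {A | IsCompact (closure A)}

/-- The group compact coarse structure on a Hausdorff topological group is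
compatible with the topology iff the group is locally compact. -/
theorem groupCompact_compatible_iff {G : Type*} [Group G] [TopologicalSpace G]
    [IsTopologicalGroup G] [T2Space G] :
    (∃ E ∈ EF (relCpt G), IsOpen E ∧ ∀ x : G, (x, x) ∈ E) ↔
      LocallyCompactSpace G := by
  constructor
  · rintro ⟨E, ⟨F, hF, hEF⟩, hEopen, hdiag⟩
    -- S = slice of E at 1 is an open nbhd of 1 contained in F⁻¹ * F
    set S : Set G := {y | (1, y) ∈ E} with hS
    have hSopen : IsOpen S := hEopen.preimage (Continuous.prodMk_right 1)
    have hS1 : (1 : G) ∈ S := hdiag 1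
    have hSsub : S ⊆ F⁻¹ * F := by
      intro y hy
      obtain ⟨g, a, ha, b, hb, hp⟩ := hEF hy
      have h1 : (1 : G) = g * a := congrArg Prod.fst hp
      have h2 : y = g * b := congrArg Prod.snd hp
      have hg : g = a⁻¹ := eq_inv_of_mul_eq_one_left h1.symm
      refine ⟨a⁻¹, Set.inv_mem_inv.mpr ha, b, hb, ?_⟩
      rw [h2, hg]
    have hKc : IsCompact ((closure F)⁻¹ * closure F) :=
      hF.inv.mul hF
    have hclS : IsCompact (closure S) := by
      refine hKc.of_isClosed_subset isClosed_closure ?_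
      refine closure_minimal (hSsub.trans ?_) hKc.isClosed
      exact Set.mul_subset_mul (Set.inv_subset_inv.mpr subset_closure) subset_closure
    exact hclS.locallyCompactSpace_of_mem_nhds_of_group
      (mem_nhds_iff.mpr ⟨S, subset_closure, hSopen, hS1⟩)
  · intro h
    obtain ⟨K, hKc, hK1⟩ := exists_compact_mem_nhds (1 : G)
    set U : Set G := interior K with hU
    have hUopen : IsOpen U := isOpen_interior
    have hU1 : (1 : G) ∈ U := mem_interior_iff_mem_nhds.mpr hK1
    refine ⟨{p : G × G | p.1⁻¹ * p.2 ∈ U}, ⟨U, ?_, ?_⟩, ?_, ?_⟩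
    · show IsCompact (closure U)
      exact hKc.of_isClosed_subset isClosed_closure
        (closure_minimal interior_subset hKc.isClosed)
    · rintro ⟨x, y⟩ hxy
      exact ⟨x, 1, hU1, x⁻¹ * y, hxy, by simp⟩
    · exact hUopen.preimage (by continuity)
    · intro x; simp [hU1]
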